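/- For k_2 ≤ 1 and max{k_1,k_2} ≥ 2, c* := min_{z_1,z_2>0} max{ z_1/(p_{k_1}(z_1)p_{k_2−1}(z_2)), z_2/(p_{k_1−1}(z_1)p_{k_2}(z_2)) } equals min_{z>0} z/p_{k_1}(z) when (k_1,k_2) is replaced by its symmetric counterpart; i.e., c*(0,k) = c*(1,k) = min_{z>0} z/p_k(z) for k ≥ 2. -/

import Mathlib

open Real Filter Set

/-- `truncExpSum k z = Σ_{j≥k} z^j/j!`. -/
noncomputable def truncExpSum (k : ℕ) (z : ℝ) : ℝ :=
  ∑' j : ℕ, if k ≤ j then z ^ j / (Nat.factorial j : ℝ) else 0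

/-- `poisTail k z = P(Poi(z) ≥ k) = e^{-z} Σ_{j≥k} z^j/j!`. -/
noncomputable def poisTail (k : ℕ) (z : ℝ) : ℝ := Real.exp (-z) * truncExpSum k z

/-- Mean of Poisson(z) conditioned on being ≥ k: `ψ_k(z) = z f_{k-1}(z)/f_k(z)`. -/
noncomputable def truncMean (k : ℕ) (z : ℝ) : ℝ :=
  z * truncExpSum (k - 1) z / truncExpSum k z

/-- Second moment of the truncated Poisson. -/
noncomputable def truncSecondMoment (k : ℕ) (z : ℝ) : ℝ :=
  (∑' j : ℕ, if k ≤ j then (j : ℝ) ^ 2 * z ^ j / (Nat.factorial j : ℝ) else 0)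
    / truncExpSum k z

/-- Variance of the truncated Poisson. -/
noncomputable def truncVar (k : ℕ) (z : ℝ) : ℝ :=
  truncSecondMoment k z - (truncMean k z) ^ 2

/-- `φ_r(z) = z·P(Poi(z)=r−1)/P(Poi(z)≥r)` for `r ≥ 1`, with `φ_0 := 0`. -/
noncomputable def phiP (r : ℕ) (z : ℝ) : ℝ :=
  if r = 0 then 0
  else z * (Real.exp (-z) * z ^ (r - 1) / (Nat.factorial (r - 1) : ℝ)) / poisTail r z

/-- `H(z_i,z_o) = (1 − φ_{k_1}(z_i))(1 − φ_{k_2}(z_o)) − φ_{k_1−1}(z_i)φ_{k_2−1}(z_o)`. -/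
noncomputable def Hfun (k1 k2 : ℕ) (zi zo : ℝ) : ℝ :=
  (1 - phiP k1 zi) * (1 - phiP k2 zo) - phiP (k1 - 1) zi * phiP (k2 - 1) zo

/-- `Ψ(z_i,z_o) = max{ z_i/(p_{k_1}(z_i)p_{k_2−1}(z_o)), z_o/(p_{k_2}(z_o)p_{k_1−1}(z_i)) }`. -/
noncomputable def Psi (k1 k2 : ℕ) (zi zo : ℝ) : ℝ :=
  max (zi / (poisTail k1 zi * poisTail (k2 - 1) zo))
      (zo / (poisTail k2 zo * poisTail (k1 - 1) zi))

/-! ### Auxiliary lemmas -/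

lemma summable_trunc (k : ℕ) (z : ℝ) :
    Summable (fun j : ℕ => if k ≤ j then z ^ j / (Nat.factorial j : ℝ) else 0) := by
  have h := (Real.summable_pow_div_factorial z).indicator {j | k ≤ j}
  convert h using 2 with j
  · rfl
  simp [Set.indicator_apply]

lemma truncExpSum_eq (k : ℕ) (z : ℝ) :
    truncExpSum k z = Real.exp z - ∑ j ∈ Finset.range k, z ^ j / (Nat.factorial j : ℝ) := by
  have hs := Real.summable_pow_div_factorial z
  have h1 := summable_trunc k z
  have h2 : Summable (fun j : ℕ => if k ≤ j then 0 else z ^ j / (Nat.factorial j : ℝ)) := by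
    have : (fun j : ℕ => if k ≤ j then 0 else z ^ j / (Nat.factorial j : ℝ))
        = fun j => z ^ j / (Nat.factorial j : ℝ)
          - (if k ≤ j then z ^ j / (Nat.factorial j : ℝ) else 0) := by
      funext j; split <;> ring
    rw [this]; exact hs.sub h1
  have hexp : Real.exp z = ∑' j : ℕ, z ^ j / (Nat.factorial j : ℝ) := by
    rw [Real.exp_eq_exp_ℝ, NormedSpace.exp_eq_tsum_div]
  have hadd : (∑' j : ℕ, z ^ j / (Nat.factorial j : ℝ))
      = truncExpSum k z + ∑' j : ℕ, (if k ≤ j then 0 else z ^ j / (Nat.factorial j : ℝ)) := by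
    rw [truncExpSum, ← Summable.tsum_add h1 h2]
    exact tsum_congr fun j => by split <;> ring
  have hg : (∑' j : ℕ, (if k ≤ j then 0 else z ^ j / (Nat.factorial j : ℝ)))
      = ∑ j ∈ Finset.range k, z ^ j / (Nat.factorial j : ℝ) := by
    rw [tsum_eq_sum (s := Finset.range k) (fun j hj => by
      simp only [Finset.mem_range, not_lt] at hj
      simp [hj])]
    refine Finset.sum_congr rfl fun j hj => ?_
    simp only [Finset.mem_range] at hj
    simp [Nat.not_le.mpr hj]
  rw [hexp, hadd, hg]; ring

lemma trunc_pos (k : ℕ) {z : ℝ} (hz : 0 < z) : 0 < truncExpSum k z := by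
  have h := Summable.le_tsum (summable_trunc k z) k (fun j _ => by positivity)
  simp only [le_refl, if_true, if_pos (le_refl k)] at h
  calc (0:ℝ) < z ^ k / (Nat.factorial k : ℝ) := by positivity
    _ ≤ _ := h

lemma trunc_le_exp (k : ℕ) {z : ℝ} (hz : 0 ≤ z) : truncExpSum k z ≤ Real.exp z := by
  rw [truncExpSum_eq]
  have : 0 ≤ ∑ j ∈ Finset.range k, z ^ j / (Nat.factorial j : ℝ) :=
    Finset.sum_nonneg fun j _ => by positivity
  linarith

lemma poisTail_pos (k : ℕ) {z : ℝ} (hz : 0 < z) : 0 < poisTail k z :=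
  mul_pos (Real.exp_pos _) (trunc_pos k hz)

lemma poisTail_le_one (k : ℕ) {z : ℝ} (hz : 0 ≤ z) : poisTail k z ≤ 1 := by
  have h := trunc_le_exp k hz
  have h2 : Real.exp (-z) * Real.exp z = 1 := by
    rw [← Real.exp_add]; simp
  calc poisTail k z ≤ Real.exp (-z) * Real.exp z :=
        mul_le_mul_of_nonneg_left h (Real.exp_pos _).le
    _ = 1 := h2

lemma poisTail_zero (z : ℝ) : poisTail 0 z = 1 := by
  rw [poisTail, truncExpSum_eq]
  simp [← Real.exp_add]

lemma poisTail_one (z : ℝ) : poisTail 1 z = 1 - Real.exp (-z) := by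
  rw [poisTail, truncExpSum_eq]
  have : Real.exp (-z) * Real.exp z = 1 := by rw [← Real.exp_add]; simp
  simp [mul_sub]
  linarith [this]

lemma key_lt {k : ℕ} (hk : 2 ≤ k) {z : ℝ} (hz : 0 < z) :
    truncExpSum k z < z * truncExpSum (k - 1) z := by
  set f : ℕ → ℝ := fun j => if k ≤ j then z ^ j / (Nat.factorial j : ℝ) else 0 with hfdef
  have hf : Summable f := summable_trunc k z
  have h0 : truncExpSum k z = ∑' j, f (j + 1) := by
    rw [truncExpSum, Summable.tsum_eq_zero_add hf]
    have : f 0 = 0 := by simp [hfdef]; omega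
    rw [this, zero_add]
  set g : ℕ → ℝ := fun j =>
    z * (if k - 1 ≤ j then z ^ j / (Nat.factorial j : ℝ) else 0) with hgdef
  have hg : Summable g := (summable_trunc (k-1) z).mul_left z
  have hzg : z * truncExpSum (k - 1) z = ∑' j, g j := by
    rw [truncExpSum, tsum_mul_left]
  rw [h0, hzg]
  refine Summable.tsum_lt_tsum_of_nonneg (fun b => ?_) (fun b => ?_) (i := k - 1) ?_ hg
  · simp only [hfdef]; split <;> positivity
  · simp only [hfdef, hgdef]
    have hiff : k ≤ b + 1 ↔ k - 1 ≤ b := by omega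
    by_cases h : k - 1 ≤ b
    · rw [if_pos (hiff.mpr h), if_pos h]
      have h3 : z * (z ^ b / (Nat.factorial b : ℝ)) = z ^ (b+1) / (Nat.factorial b : ℝ) := by
        rw [← mul_div_assoc, ← pow_succ']
      rw [h3]
      gcongr
      · exact Nat.le_succ b
    · rw [if_neg (fun hc => h (hiff.mp hc)), if_neg h, mul_zero]
  · simp only [hfdef, hgdef]
    have h1 : k - 1 + 1 = k := by omega
    rw [if_pos (by omega : k ≤ k - 1 + 1), if_pos (le_refl (k-1)), h1]
    have h2 : z * (z ^ (k-1) / (Nat.factorial (k-1) : ℝ))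
        = z ^ k / (Nat.factorial (k-1) : ℝ) := by
      rw [← mul_div_assoc, ← pow_succ', h1]
    rw [h2]
    apply div_lt_div_of_pos_left (by positivity) (by exact_mod_cast Nat.factorial_pos (k-1))
    exact_mod_cast (Nat.factorial_lt (by omega)).mpr (by omega)

lemma trunc_mono {k l : ℕ} (hkl : k ≤ l) {z : ℝ} (hz : 0 ≤ z) :
    truncExpSum l z ≤ truncExpSum k z := by
  refine Summable.tsum_le_tsum (fun j => ?_) (summable_trunc l z) (summable_trunc k z)
  by_cases h : l ≤ j
  · rw [if_pos h, if_pos (hkl.trans h)]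
  · rw [if_neg h]; split <;> positivity

lemma trunc_small {k : ℕ} (hk : 2 ≤ k) {z : ℝ} (hz : 0 < z) (hz1 : z ≤ 1) :
    truncExpSum k z ≤ z ^ 2 := by
  have h1 : truncExpSum k z ≤ truncExpSum 2 z := trunc_mono hk hz.le
  have h2 : truncExpSum 2 z = Real.exp z - (1 + z) := by
    rw [truncExpSum_eq]
    norm_num [Finset.sum_range_succ]
  have hb := Real.exp_bound (x := z) (by rw [abs_of_pos hz]; exact hz1) (n := 2) (by norm_num)
  have hsum : ∑ m ∈ Finset.range 2, z ^ m / (Nat.factorial m : ℝ) = 1 + z := by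
    norm_num [Finset.sum_range_succ]
  rw [hsum, abs_of_pos hz] at hb
  norm_num [Nat.factorial] at hb
  have := abs_le.mp hb
  nlinarith [this.2, sq_nonneg z]

lemma exp_neg_bound {x : ℝ} (hx : 0 ≤ x) (hx1 : x ≤ 1) :
    Real.exp (-x) ≤ 1 - x + x ^ 2 * (3/4) := by
  have hb := Real.exp_bound (x := -x) (by rw [abs_neg, abs_of_nonneg hx]; exact hx1)
    (n := 2) (by norm_num)
  have hsum : ∑ m ∈ Finset.range 2, (-x) ^ m / (Nat.factorial m : ℝ) = 1 - x := by
    norm_num [Finset.sum_range_succ]; ring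
  rw [hsum, abs_neg, abs_of_nonneg hx] at hb
  norm_num [Nat.factorial] at hb
  have := abs_le.mp hb
  linarith [this.2]

lemma choose_z1 {C : ℝ} (hC : 1 < C) : ∃ x > (0:ℝ), x ≤ C * poisTail 1 x := by
  refine ⟨min 1 ((C - 1) / C), lt_min one_pos (div_pos (by linarith) (by linarith)), ?_⟩
  set x := min 1 ((C - 1) / C) with hxdef
  have hx0 : 0 < x := lt_min one_pos (div_pos (by linarith) (by linarith))
  have hx1 : x ≤ 1 := min_le_left _ _
  have hxC : x * C ≤ C - 1 := by
    have h := min_le_right 1 ((C - 1) / C)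
    calc x * C ≤ (C - 1) / C * C := by nlinarith
      _ = C - 1 := div_mul_cancel₀ _ (by linarith)
  rw [poisTail_one]
  have hexp := exp_neg_bound hx0.le hx1
  nlinarith [hexp, hx0, hx1, hxC, hC, sq_nonneg x]

lemma poisTail_continuous (k : ℕ) : Continuous (poisTail k) := by
  have h : poisTail k = fun z => Real.exp (-z) *
      (Real.exp z - ∑ j ∈ Finset.range k, z ^ j / (Nat.factorial j : ℝ)) :=
    funext fun z => by rw [poisTail, truncExpSum_eq]
  rw [h]
  exact (Real.continuous_exp.comp continuous_neg).mul
    (Real.continuous_exp.sub (continuous_finset_sum _ fun j _ =>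
      (continuous_pow j).div_const _))

lemma f_ge_id (k : ℕ) {z : ℝ} (hz : 0 < z) : z ≤ z / poisTail k z := by
  rw [le_div_iff₀ (poisTail_pos k hz)]
  nlinarith [poisTail_le_one k hz.le, poisTail_pos k hz]

lemma f_ge_inv {k : ℕ} (hk : 2 ≤ k) {z : ℝ} (hz : 0 < z) (h1 : z ≤ 1) :
    1 / z ≤ z / poisTail k z := by
  have hexp : Real.exp (-z) ≤ 1 := by
    rw [Real.exp_le_one_iff]; linarith
  have hp : poisTail k z ≤ z ^ 2 := by
    calc poisTail k z ≤ 1 * truncExpSum k z :=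
          mul_le_mul_of_nonneg_right hexp (trunc_pos k hz).le
      _ = truncExpSum k z := one_mul _
      _ ≤ z ^ 2 := trunc_small hk hz h1
  rw [div_le_div_iff₀ hz (poisTail_pos k hz)]
  nlinarith [hp]

lemma attain {k : ℕ} (hk : 2 ≤ k) :
    ∃ m, IsLeast {x : ℝ | ∃ z > (0 : ℝ), x = z / poisTail k z} m := by
  set f : ℝ → ℝ := fun z => z / poisTail k z with hfdef
  set M : ℝ := f 1 with hMdef
  have hM0 : 0 < M := div_pos one_pos (poisTail_pos k one_pos)
  set a : ℝ := min 1 (1 / (M + 1)) with hadef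
  set b : ℝ := max 1 (M + 1) with hbdef
  have ha0 : 0 < a := lt_min one_pos (div_pos one_pos (by linarith))
  have ha1 : a ≤ 1 := min_le_left _ _
  have hb1 : (1:ℝ) ≤ b := le_max_left _ _
  have hab : a ≤ b := ha1.trans hb1
  have h1mem : (1:ℝ) ∈ Icc a b := ⟨ha1, hb1⟩
  have hcont : ContinuousOn f (Icc a b) := by
    apply ContinuousOn.div continuous_id.continuousOn
      (poisTail_continuous k).continuousOn
    intro z hz
    exact (poisTail_pos k (lt_of_lt_of_le ha0 hz.1)).ne'
  obtain ⟨zs, hzs, hmin⟩ :=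
    isCompact_Icc.exists_isMinOn ⟨1, h1mem⟩ hcont
  have hzs0 : 0 < zs := lt_of_lt_of_le ha0 hzs.1
  refine ⟨f zs, ⟨zs, hzs0, rfl⟩, ?_⟩
  rintro x ⟨z, hz, rfl⟩
  by_cases hmem : z ∈ Icc a b
  · exact hmin hmem
  · have hfM : f zs ≤ M := hmin h1mem
    rcases not_and_or.mp (fun h : a ≤ z ∧ z ≤ b => hmem ⟨h.1, h.2⟩) with h | h
    · push_neg at h
      have hz1 : z ≤ 1 := le_of_lt (lt_of_lt_of_le h ha1)
      have h2 : z < 1 / (M + 1) := lt_of_lt_of_le h (min_le_right _ _)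
      have h3 : M + 1 ≤ 1 / z := by
        rw [le_div_iff₀ hz, mul_comm]
        exact ((lt_div_iff₀ (by linarith : (0:ℝ) < M + 1)).mp h2).le
      calc f zs ≤ M := hfM
        _ ≤ 1 / z := by linarith
        _ ≤ f z := f_ge_inv hk hz hz1
    · push_neg at h
      have h2 : M + 1 ≤ z := le_of_lt (lt_of_le_of_lt (le_max_right _ _) h)
      calc f zs ≤ M := hfM
        _ ≤ z := by linarith
        _ ≤ f z := f_ge_id k hz

/-- `c*(0,k) = c*(1,k) = min_{z>0} z/p_k(z)` for `k ≥ 2`, the minimum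
being attained. -/
theorem stmt16 (k : ℕ) (hk : 2 ≤ k) :
    sInf {x : ℝ | ∃ z1 > (0 : ℝ), ∃ z2 > (0 : ℝ), x = Psi 0 k z1 z2}
        = sInf {x : ℝ | ∃ z > (0 : ℝ), x = z / poisTail k z} ∧
    sInf {x : ℝ | ∃ z1 > (0 : ℝ), ∃ z2 > (0 : ℝ), x = Psi 1 k z1 z2}
        = sInf {x : ℝ | ∃ z > (0 : ℝ), x = z / poisTail k z} ∧
    IsLeast {x : ℝ | ∃ z > (0 : ℝ), x = z / poisTail k z}
      (sInf {x : ℝ | ∃ z > (0 : ℝ), x = z / poisTail k z}) := by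
  obtain ⟨m, hL⟩ := attain hk
  set S : Set ℝ := {x : ℝ | ∃ z > (0 : ℝ), x = z / poisTail k z} with hSdef
  have hinfS : sInf S = m := hL.csInf_eq
  -- part 0
  have part0 : sInf {x : ℝ | ∃ z1 > (0 : ℝ), ∃ z2 > (0 : ℝ), x = Psi 0 k z1 z2} = sInf S := by
    set A : Set ℝ := {x : ℝ | ∃ z1 > (0 : ℝ), ∃ z2 > (0 : ℝ), x = Psi 0 k z1 z2} with hAdef
    have hlow : ∀ x ∈ A, m ≤ x := by
      rintro x ⟨z1, hz1, z2, hz2, rfl⟩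
      have hm : m ≤ z2 / poisTail k z2 := hL.2 ⟨z2, hz2, rfl⟩
      refine hm.trans ?_
      calc z2 / poisTail k z2
          = z2 / (poisTail k z2 * poisTail (0 - 1) z1) := by
            norm_num [poisTail_zero]
        _ ≤ Psi 0 k z1 z2 := le_max_right _ _
    have hsub : S ⊆ A := by
      rintro x ⟨z, hz, rfl⟩
      refine ⟨z / poisTail k z * poisTail (k - 1) z,
        mul_pos (div_pos hz (poisTail_pos k hz)) (poisTail_pos (k-1) hz), z, hz, ?_⟩
      have hne : poisTail (k - 1) z ≠ 0 := (poisTail_pos (k-1) hz).ne'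
      rw [Psi]
      norm_num [poisTail_zero]
      rw [mul_div_assoc, div_self hne, mul_one]
    have hmA : m ∈ A := hsub hL.1
    rw [hinfS]
    exact le_antisymm (csInf_le ⟨m, hlow⟩ hmA) (le_csInf ⟨m, hmA⟩ hlow)
  -- part 1
  have part1 : sInf {x : ℝ | ∃ z1 > (0 : ℝ), ∃ z2 > (0 : ℝ), x = Psi 1 k z1 z2} = sInf S := by
    set A : Set ℝ := {x : ℝ | ∃ z1 > (0 : ℝ), ∃ z2 > (0 : ℝ), x = Psi 1 k z1 z2} with hAdef
    have hlow : ∀ x ∈ A, m ≤ x := by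
      rintro x ⟨z1, hz1, z2, hz2, rfl⟩
      have hm : m ≤ z2 / poisTail k z2 := hL.2 ⟨z2, hz2, rfl⟩
      refine hm.trans ?_
      calc z2 / poisTail k z2
          = z2 / (poisTail k z2 * poisTail (1 - 1) z1) := by
            norm_num [poisTail_zero]
        _ ≤ Psi 1 k z1 z2 := le_max_right _ _
    have hsub : S ⊆ A := by
      rintro x ⟨z, hz, rfl⟩
      have hpk := poisTail_pos k hz
      have hpk1 := poisTail_pos (k-1) hz
      set C : ℝ := z / poisTail k z * poisTail (k - 1) z with hCdef
      have hC : 1 < C := by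
        have hkey : poisTail k z < z * poisTail (k - 1) z := by
          rw [poisTail, poisTail, ← mul_assoc, mul_comm z (Real.exp (-z)), mul_assoc]
          exact mul_lt_mul_of_pos_left (key_lt hk hz) (Real.exp_pos _)
        rw [hCdef, div_mul_eq_mul_div, lt_div_iff₀ hpk, one_mul]
        linarith [hkey]
      obtain ⟨x1, hx10, hx1le⟩ := choose_z1 hC
      have hp1 := poisTail_pos 1 hx10
      refine ⟨x1, hx10, z, hz, ?_⟩
      rw [Psi]
      norm_num [poisTail_zero]
      rw [div_le_div_iff₀ (mul_pos hp1 hpk1) hpk]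
      calc x1 * poisTail k z ≤ C * poisTail 1 x1 * poisTail k z :=
            mul_le_mul_of_nonneg_right hx1le hpk.le
        _ = z * (poisTail 1 x1 * poisTail (k - 1) z) := by
            rw [hCdef]; field_simp
    have hmA : m ∈ A := hsub hL.1
    rw [hinfS]
    exact le_antisymm (csInf_le ⟨m, hlow⟩ hmA) (le_csInf ⟨m, hmA⟩ hlow)
  refine ⟨part0, part1, ?_⟩
  rw [hinfS]
  exact hL
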